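/- Let T be a positive trace-class operator on L²(ℝ) with trace 1, and define G_T(Z) = (1/2π) ∫_Z W(q,p) T W(q,p)* dq dp for Borel Z ⊆ ℝ². Then for any states T, S, the probability measure Z ↦ tr[S G_T(Z)] equals Z ↦ tr[T G_S(−Z)]. -/

import Mathlib

open MeasureTheory

local notation "H" => Lp ℂ 2 (volume : Measure ℝ)

lemma aux (q p x : ℝ) (a b : ℂ) :
    (starRingEnd ℂ) ((starRingEnd ℂ) a *
      (Complex.exp (Complex.I * (q * p / 2)) * Complex.exp (Complex.I * (p * (x + q))) * b))
    = Complex.exp (-(2 * Complex.I * (p * q))) *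
      ((starRingEnd ℂ) b * (Complex.exp (Complex.I * (q * p / 2))
        * Complex.exp (-(Complex.I * (p * x))) * a)) := by
  have h1 : (starRingEnd ℂ) (Complex.exp (Complex.I * (q * p / 2)))
      = Complex.exp (-(Complex.I * (q * p / 2))) := by
    rw [← Complex.exp_conj]
    congr 1
    simp [map_mul, map_div₀, map_ofNat, Complex.conj_I, Complex.conj_ofReal]
  have h2 : (starRingEnd ℂ) (Complex.exp (Complex.I * ((p:ℂ) * ((x:ℂ) + (q:ℂ)))))
      = Complex.exp (-(Complex.I * ((p:ℂ) * ((x:ℂ) + (q:ℂ))))) := by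
    rw [← Complex.exp_conj]
    congr 1
    simp [map_mul, map_add, Complex.conj_I, Complex.conj_ofReal]
  rw [map_mul, map_mul, map_mul, Complex.conj_conj, h1, h2]
  have l1 : a * (Complex.exp (-(Complex.I * (q * p / 2)))
        * Complex.exp (-(Complex.I * ((p:ℂ) * ((x:ℂ) + (q:ℂ))))) * (starRingEnd ℂ) b)
      = (a * (starRingEnd ℂ) b) *
        Complex.exp (-(Complex.I * (q * p / 2)) + -(Complex.I * ((p:ℂ) * ((x:ℂ) + (q:ℂ))))) := by
    rw [Complex.exp_add]; ring
  have l2 : Complex.exp (-(2 * Complex.I * (p * q))) *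
        ((starRingEnd ℂ) b * (Complex.exp (Complex.I * (q * p / 2))
          * Complex.exp (-(Complex.I * (p * x))) * a))
      = (a * (starRingEnd ℂ) b) *
        Complex.exp (-(2 * Complex.I * (p * q)) + (Complex.I * (q * p / 2) + -(Complex.I * (p * x)))) := by
    rw [Complex.exp_add, Complex.exp_add]; ring
  rw [l1, l2]
  congr 1
  ring_nf


/-- For states `T = Σ lamT_j |φT_j⟩⟨φT_j|` and `S = Σ lamS_i |φS_i⟩⟨φS_i|` and the covariant
phase space observable `G_T(Z) = (1/2π)∫_Z W(z) T W(z)* dz` generated by the Weyl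
representation `W`, one has `tr[S G_T(Z)] = tr[T G_S(−Z)]`; the traces are written out
through the spectral decompositions of the two states. -/
theorem stmt6
    (W : ℝ × ℝ → (H →L[ℂ] H))
    (hW : ∀ q p : ℝ, ∀ ψ : H,
      (⇑(W (q, p) ψ) : ℝ → ℂ) =ᵐ[volume]
        fun x => Complex.exp (Complex.I * (q * p / 2)) * Complex.exp (Complex.I * (p * x))
          * ψ (x - q))
    (lamT lamS : ℕ → ℝ) (φT φS : ℕ → H)
    (hlamT : ∀ i, 0 ≤ lamT i) (hlamS : ∀ i, 0 ≤ lamS i)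
    (hT1 : HasSum lamT 1) (hS1 : HasSum lamS 1)
    (hoT : Orthonormal ℂ φT) (hoS : Orthonormal ℂ φS)
    (Z : Set (ℝ × ℝ)) (hZ : MeasurableSet Z) :
    (1 / (2 * Real.pi)) *
        ∫ z in Z, ∑' i, ∑' j, lamS i * lamT j * ‖(inner ℂ (φS i) (W z (φT j)) : ℂ)‖ ^ 2
          ∂(volume : Measure (ℝ × ℝ))
      = (1 / (2 * Real.pi)) *
        ∫ z in (-Z), ∑' j, ∑' i, lamT j * lamS i * ‖(inner ℂ (φT j) (W z (φS i)) : ℂ)‖ ^ 2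
          ∂(volume : Measure (ℝ × ℝ)) := by
  -- W is norm-preserving
  have hWnorm : ∀ (q p : ℝ) (ψ : H), ‖W (q, p) ψ‖ = ‖ψ‖ := by
    intro q p ψ
    rw [Lp.norm_def, Lp.norm_def]
    congr 1
    have h1 : eLpNorm (⇑(W (q, p) ψ)) 2 volume
        = eLpNorm ((⇑ψ) ∘ (fun x : ℝ => x - q)) 2 volume := by
      apply eLpNorm_congr_norm_ae
      filter_upwards [hW q p ψ] with x hx
      rw [hx]
      simp [Complex.norm_exp, Function.comp]
    rw [h1]
    exact eLpNorm_comp_measurePreserving (Lp.aestronglyMeasurable ψ)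
      (measurePreserving_sub_right volume q)
  -- the key symmetry of matrix elements
  have key : ∀ (q p : ℝ) (φ ψ : H),
      ‖(inner ℂ φ (W (q, p) ψ) : ℂ)‖ = ‖(inner ℂ ψ (W (-q, -p) φ) : ℂ)‖ := by
    intro q p φ ψ
    have hA : (inner ℂ φ (W (q, p) ψ) : ℂ)
        = ∫ x : ℝ, (starRingEnd ℂ) (φ x) *
            (Complex.exp (Complex.I * (q * p / 2)) * Complex.exp (Complex.I * (p * x))
              * ψ (x - q)) := by
      rw [L2.inner_def]
      apply integral_congr_ae
      filter_upwards [hW q p ψ] with x hx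
      rw [RCLike.inner_apply, hx, mul_comm]
    have hB : (inner ℂ ψ (W (-q, -p) φ) : ℂ)
        = ∫ x : ℝ, (starRingEnd ℂ) (ψ x) *
            (Complex.exp (Complex.I * (q * p / 2)) * Complex.exp (-(Complex.I * (p * x)))
              * φ (x + q)) := by
      rw [L2.inner_def]
      apply integral_congr_ae
      filter_upwards [hW (-q) (-p) φ] with x hx
      rw [RCLike.inner_apply, hx]
      have : x - -q = x + q := by ring
      rw [this]
      push_cast
      ring_nf
    -- substitute x ↦ x + q in A
    have hA2 : (inner ℂ φ (W (q, p) ψ) : ℂ)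
        = ∫ x : ℝ, (starRingEnd ℂ) (φ (x + q)) *
            (Complex.exp (Complex.I * (q * p / 2)) * Complex.exp (Complex.I * (p * (x + q)))
              * ψ x) := by
      rw [hA, ← integral_add_right_eq_self (fun x : ℝ => (starRingEnd ℂ) (φ x) *
            (Complex.exp (Complex.I * (q * p / 2)) * Complex.exp (Complex.I * (p * x))
              * ψ (x - q))) q]
      congr 1
      funext x
      simp
    -- conjugate of A equals a unit phase times B
    have hconj : (starRingEnd ℂ) (inner ℂ φ (W (q, p) ψ) : ℂ)
        = Complex.exp (-(2 * Complex.I * (p * q))) * (inner ℂ ψ (W (-q, -p) φ) : ℂ) := by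
      rw [hA2, ← integral_conj, hB, ← integral_const_mul]
      congr 1
      funext x
      exact aux q p x _ _
    have := congrArg norm hconj
    rw [RCLike.norm_conj] at this
    rw [this, norm_mul]
    have hunit : ‖Complex.exp (-(2 * Complex.I * (p * q)))‖ = 1 := by
      rw [Complex.norm_exp]
      simp
    rw [hunit, one_mul]
  -- summability of the double series
  have hsum : ∀ z : ℝ × ℝ, Summable (fun ij : ℕ × ℕ =>
      lamS ij.1 * lamT ij.2 * ‖(inner ℂ (φS ij.1) (W z (φT ij.2)) : ℂ)‖ ^ 2) := by
    intro z
    apply Summable.of_nonneg_of_le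
      (fun ij => mul_nonneg (mul_nonneg (hlamS _) (hlamT _)) (by positivity))
      (fun ij => ?_)
      (hS1.summable.mul_of_nonneg hT1.summable hlamS hlamT)
    have hb : ‖(inner ℂ (φS ij.1) (W z (φT ij.2)) : ℂ)‖ ≤ 1 := by
      calc ‖(inner ℂ (φS ij.1) (W z (φT ij.2)) : ℂ)‖ ≤ ‖φS ij.1‖ * ‖W z (φT ij.2)‖ :=
            norm_inner_le_norm _ _
        _ = 1 := by
            have hz : W z = W (z.1, z.2) := by simp
            rw [hoS.1 ij.1, hz, hWnorm z.1 z.2, hoT.1 ij.2, one_mul]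
    calc lamS ij.1 * lamT ij.2 * ‖(inner ℂ (φS ij.1) (W z (φT ij.2)) : ℂ)‖ ^ 2
        ≤ lamS ij.1 * lamT ij.2 * 1 ^ 2 := by
          apply mul_le_mul_of_nonneg_left _ (mul_nonneg (hlamS _) (hlamT _))
          exact pow_le_pow_left₀ (norm_nonneg _) hb 2
      _ = lamS ij.1 * lamT ij.2 := by ring
  -- change of variables z ↦ -z in the right-hand integral, then pointwise identification
  congr 1
  have hneg : (∫ z in (-Z), ∑' j, ∑' i,
        lamT j * lamS i * ‖(inner ℂ (φT j) (W z (φS i)) : ℂ)‖ ^ 2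
        ∂(volume : Measure (ℝ × ℝ)))
      = ∫ z in Z, ∑' j, ∑' i,
        lamT j * lamS i * ‖(inner ℂ (φT j) (W (-z) (φS i)) : ℂ)‖ ^ 2
        ∂(volume : Measure (ℝ × ℝ)) := by
    rw [← integral_indicator hZ.neg, ← integral_indicator hZ,
      ← integral_neg_eq_self ((-Z).indicator fun z => ∑' j, ∑' i,
        lamT j * lamS i * ‖(inner ℂ (φT j) (W z (φS i)) : ℂ)‖ ^ 2) volume]
    congr 1
    funext z
    by_cases hz : z ∈ Z
    · rw [Set.indicator_of_mem (Set.neg_mem_neg.2 hz), Set.indicator_of_mem hz]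
    · rw [Set.indicator_of_notMem (fun h => hz (Set.neg_mem_neg.1 h)),
        Set.indicator_of_notMem hz]
  rw [hneg]
  congr 1
  funext z
  -- pointwise: use key and swap the sums
  have hterm : ∀ j i, lamT j * lamS i * ‖(inner ℂ (φT j) (W (-z) (φS i)) : ℂ)‖ ^ 2
      = lamS i * lamT j * ‖(inner ℂ (φS i) (W z (φT j)) : ℂ)‖ ^ 2 := by
    intro j i
    have hz1 : W z = W (z.1, z.2) := by simp
    have hz2 : W (-z) = W (-z.1, -z.2) := rfl
    rw [hz1, hz2, ← key z.1 z.2 (φS i) (φT j)]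
    ring
  calc (∑' i, ∑' j, lamS i * lamT j * ‖(inner ℂ (φS i) (W z (φT j)) : ℂ)‖ ^ 2)
      = ∑' j, ∑' i, lamS i * lamT j * ‖(inner ℂ (φS i) (W z (φT j)) : ℂ)‖ ^ 2 := by
        refine Summable.tsum_comm' (hsum z).prod_symm (fun j => (hsum z).prod_symm.prod_factor j)
          (fun i => (hsum z).prod_factor i)
    _ = ∑' j, ∑' i, lamT j * lamS i * ‖(inner ℂ (φT j) (W (-z) (φS i)) : ℂ)‖ ^ 2 := by
        exact tsum_congr fun j => tsum_congr fun i => (hterm j i).symm
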